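/- Let K ≥ 1, let p₁, …, p_K be positive integers, and let a, b be integers. Define the continuants Δ₀ = 1, Δ₁ = p₁, Δ_j = p_j·Δ_{j−1} + Δ_{j−2} for 2 ≤ j ≤ K. Define sequences of integers I_j, J_j, A_j, B_j (1 ≤ j ≤ K) by: A₀ := b; I₁ = a, J₁ = b; I_j = A_{j−2} for 2 ≤ j ≤ K; J₂ = B₁ and J_j = B_{j−1} for 3 ≤ j ≤ K; and A_j = p_j·J_j − (p_j − 1)·I_j, B_j = (p_j + 1)·J_j − p_j·I_j for 1 ≤ j ≤ K. Then for all 1 ≤ j ≤ K: A_j = Δ_j·b − (Δ_j − 1)·a and B_j = (Δ_j + Δ_{j−1})·b − (Δ_j + Δ_{j−1} − 1)·a. -/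
import Mathlib


theorem twist_region_values (K : ℕ) (hK : 1 ≤ K) (p : ℕ → ℤ)
    (hp : ∀ j, 1 ≤ j → j ≤ K → 0 < p j)
    (a b : ℤ) (Δ I J A B : ℕ → ℤ)
    (hΔ0 : Δ 0 = 1) (hΔ1 : Δ 1 = p 1)
    (hΔ : ∀ j, 2 ≤ j → j ≤ K → Δ j = p j * Δ (j - 1) + Δ (j - 2))
    (hA0 : A 0 = b)
    (hI1 : I 1 = a) (hJ1 : J 1 = b)
    (hI : ∀ j, 2 ≤ j → j ≤ K → I j = A (j - 2))
    (hJ : ∀ j, 2 ≤ j → j ≤ K → J j = B (j - 1))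
    (hA : ∀ j, 1 ≤ j → j ≤ K → A j = p j * J j - (p j - 1) * I j)
    (hB : ∀ j, 1 ≤ j → j ≤ K → B j = (p j + 1) * J j - p j * I j) :
    ∀ j, 1 ≤ j → j ≤ K →
      A j = Δ j * b - (Δ j - 1) * a ∧
      B j = (Δ j + Δ (j - 1)) * b - (Δ j + Δ (j - 1) - 1) * a := by
  intro j
  induction j using Nat.strong_induction_on with
  | _ j ih =>
    intro hj1 hjK
    rcases eq_or_lt_of_le hj1 with h1 | h2
    · -- j = 1
      subst h1
      have e0 : (1:ℕ) - 1 = 0 := rfl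
      refine ⟨?_, ?_⟩
      · rw [hA 1 le_rfl hjK, hJ1, hI1, hΔ1]
      · rw [hB 1 le_rfl hjK, hJ1, hI1, e0, hΔ1, hΔ0]
        ring
    · -- 2 ≤ j
      have h2' : 2 ≤ j := h2
      have hjm1 : 1 ≤ j - 1 := by omega
      obtain ⟨ihA, ihB⟩ := ih (j - 1) (by omega) hjm1 (by omega)
      have hAj2 : A (j - 2) = Δ (j - 2) * b - (Δ (j - 2) - 1) * a := by
        rcases eq_or_lt_of_le h2' with h3 | h4
        · have e : j - 2 = 0 := by omega
          rw [e, hA0, hΔ0]; ring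
        · exact (ih (j - 2) (by omega) (by omega) (by omega)).1
      have hjm2 : (j - 1) - 1 = j - 2 := by omega
      rw [hjm2] at ihB
      have hΔj := hΔ j h2' hjK
      refine ⟨?_, ?_⟩
      · rw [hA j hj1 hjK, hJ j h2' hjK, hI j h2' hjK, ihB, hAj2, hΔj]; ring
      · rw [hB j hj1 hjK, hJ j h2' hjK, hI j h2' hjK, ihB, hAj2, hΔj]; ring
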